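/- Let G be a finite connected simple graph without isolated vertices that has two distinct vertices u and v satisfying N[u] ⊆ N[v]. Then Dom has a winning strategy in the Dom-start Disjoint Domination Game on G. -/

import Mathlib

namespace DDG

variable {V : Type*}

/-- The closed neighborhood `N[v]` of a vertex `v`. -/
def closedNbhd (G : SimpleGraph V) (v : V) : Set V := insert v (G.neighborSet v)

/-- `D` is a dominating set of `G`: every vertex has a member of `D`
in its closed neighborhood. -/
def Dominates (G : SimpleGraph V) (D : Set V) : Prop :=
  ∀ v : V, (closedNbhd G v ∩ D).Nonempty

/-- A position of the game: the sets of purple and blue vertices. -/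
structure Pos (V : Type*) where
  purple : Set V
  blue : Set V

namespace Pos

/-- The vertex class of a color (`true` = purple, `false` = blue). -/
def colorSet (p : Pos V) (c : Bool) : Set V := if c then p.purple else p.blue

/-- The position obtained by coloring vertex `v` with color `c`. -/
def play (p : Pos V) (v : V) (c : Bool) : Pos V :=
  if c then ⟨insert v p.purple, p.blue⟩ else ⟨p.purple, insert v p.blue⟩

end Pos

/-- A legal move of the Disjoint Domination Game: select an uncolored vertex `v`
and a color `c` such that some `u ∈ N[v]` is not yet dominated in color `c`. -/
def LegalMove (G : SimpleGraph V) (p : Pos V) (v : V) (c : Bool) : Prop :=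
  v ∉ p.purple ∪ p.blue ∧ ∃ u ∈ closedNbhd G v, closedNbhd G u ∩ p.colorSet c = ∅

/-- End condition ⟨s⟩: some closed neighborhood is monochromatic; Sepy wins. -/
def SepyEnd (G : SimpleGraph V) (p : Pos V) : Prop :=
  ∃ v : V, closedNbhd G v ⊆ p.purple ∨ closedNbhd G v ⊆ p.blue

/-- End condition ⟨d⟩: both color classes are dominating sets; Dom wins. -/
def DomEnd (G : SimpleGraph V) (p : Pos V) : Prop :=
  Dominates G p.purple ∧ Dominates G p.blue

/-- `DomWins G turn p` : Dom has a winning strategy in the Disjoint Domination Game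
from position `p`, where `turn = true` iff it is Dom's move. -/
inductive DomWins (G : SimpleGraph V) : Bool → Pos V → Prop
  | terminal (turn : Bool) (p : Pos V) :
      ¬ SepyEnd G p → DomEnd G p → DomWins G turn p
  | domStep (p : Pos V) (v : V) (c : Bool) :
      ¬ SepyEnd G p → ¬ DomEnd G p → LegalMove G p v c →
      DomWins G false (p.play v c) → DomWins G true p
  | sepyStep (p : Pos V) :
      ¬ SepyEnd G p → ¬ DomEnd G p →
      (∃ v c, LegalMove G p v c) →
      (∀ v c, LegalMove G p v c → DomWins G true (p.play v c)) →
      DomWins G false p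

/-- `SepyWins G turn p` : Sepy has a winning strategy in the Disjoint Domination Game
from position `p`, where `turn = true` iff it is Dom's move. -/
inductive SepyWins (G : SimpleGraph V) : Bool → Pos V → Prop
  | terminal (turn : Bool) (p : Pos V) : SepyEnd G p → SepyWins G turn p
  | sepyStep (p : Pos V) (v : V) (c : Bool) :
      ¬ SepyEnd G p → ¬ DomEnd G p → LegalMove G p v c →
      SepyWins G true (p.play v c) → SepyWins G false p
  | domStep (p : Pos V) :
      ¬ SepyEnd G p → ¬ DomEnd G p →
      (∃ v c, LegalMove G p v c) →
      (∀ v c, LegalMove G p v c → SepyWins G false (p.play v c)) →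
      SepyWins G true p

end DDG


open DDG


namespace S7

open DDG Set

variable {V : Type*} {G : SimpleGraph V}

lemma mem_cn_iff {u v : V} : u ∈ closedNbhd G v ↔ u = v ∨ G.Adj v u := by
  simp [closedNbhd]

lemma cn_self (v : V) : v ∈ closedNbhd G v := by simp [closedNbhd]

lemma cn_comm {u v : V} (h : u ∈ closedNbhd G v) : v ∈ closedNbhd G u := by
  rcases mem_cn_iff.1 h with h | h
  · subst h; exact cn_self _
  · exact mem_cn_iff.2 (Or.inr h.symm)

/-- The set of colored vertices. -/
def colored (p : Pos V) : Set V := p.purple ∪ p.blue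

lemma cs_true (p : Pos V) : p.colorSet true = p.purple := rfl

lemma cs_false (p : Pos V) : p.colorSet false = p.blue := rfl

lemma mem_colored_iff {p : Pos V} {z : V} (c : Bool) :
    z ∈ colored p ↔ z ∈ p.colorSet c ∨ z ∈ p.colorSet (!c) := by
  cases c <;> simp [colored, Pos.colorSet] <;> tauto

lemma colorSet_subset_colored (p : Pos V) (c : Bool) : p.colorSet c ⊆ colored p :=
  fun _ hz => (mem_colored_iff c).2 (Or.inl hz)

lemma play_colorSet_same (p : Pos V) (x : V) (c : Bool) :
    (p.play x c).colorSet c = insert x (p.colorSet c) := by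
  cases c <;> simp [Pos.play, Pos.colorSet]

lemma play_colorSet_other (p : Pos V) (x : V) {c c' : Bool} (h : c' ≠ c) :
    (p.play x c).colorSet c' = p.colorSet c' := by
  cases c <;> cases c' <;> simp_all [Pos.play, Pos.colorSet]

lemma play_colored (p : Pos V) (x : V) (c : Bool) :
    colored (p.play x c) = insert x (colored p) := by
  cases c <;> simp [colored, Pos.play, Set.insert_union, Set.union_insert]

lemma colorSet_mono_play (p : Pos V) (x : V) (c c' : Bool) :
    p.colorSet c' ⊆ (p.play x c).colorSet c' := by
  by_cases h : c' = c
  · subst h; rw [play_colorSet_same]; exact Set.subset_insert _ _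
  · rw [play_colorSet_other p x h]

lemma sepyEnd_iff {p : Pos V} :
    SepyEnd G p ↔ ∃ (w : V) (c : Bool), closedNbhd G w ⊆ p.colorSet c := by
  constructor
  · rintro ⟨w, h | h⟩
    exacts [⟨w, true, h⟩, ⟨w, false, h⟩]
  · rintro ⟨w, c, h⟩
    cases c
    exacts [⟨w, Or.inr h⟩, ⟨w, Or.inl h⟩]

lemma inter_empty_iff {s t : Set V} : s ∩ t = ∅ ↔ ∀ z ∈ s, z ∉ t := by
  rw [Set.eq_empty_iff_forall_notMem]
  simp [not_and]

/-- Disjointness of the two color classes, stated symmetrically. -/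
def Sep (p : Pos V) : Prop := ∀ z (c : Bool), z ∈ p.colorSet c → z ∈ p.colorSet (!c) → False

lemma sep_play {p : Pos V} (hs : Sep p) {x : V} (hx : x ∉ colored p) (c : Bool) :
    Sep (p.play x c) := by
  intro z c' h1 h2
  by_cases hc : c' = c
  · subst hc
    rw [play_colorSet_same] at h1
    rw [play_colorSet_other p x (by cases c' <;> simp)] at h2
    rcases Set.mem_insert_iff.1 h1 with rfl | h1
    · exact hx (colorSet_subset_colored p _ h2)
    · exact hs z c' h1 h2
  · have hcc : (!c') = c := by cases c <;> cases c' <;> simp_all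
    rw [play_colorSet_other p x hc] at h1
    rw [hcc, play_colorSet_same] at h2
    rcases Set.mem_insert_iff.1 h2 with rfl | h2
    · exact hx (colorSet_subset_colored p _ h1)
    · exact hs z c' h1 (hcc ▸ h2)

/-- `w` is *dead* for color `c`: some uncolored vertex in `N[w]` has its whole closed
neighborhood dominated in color `c`, so that vertex can never legally receive color `c`. -/
def Dead (G : SimpleGraph V) (c : Bool) (p : Pos V) (w : V) : Prop :=
  ∃ x ∈ closedNbhd G w, x ∉ colored p ∧
    ∀ z ∈ closedNbhd G x, (closedNbhd G z ∩ p.colorSet c).Nonempty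

/-- `w` is colored `c` and its closed neighborhood contains no vertex of the other color. -/
def CMono (G : SimpleGraph V) (c : Bool) (p : Pos V) (w : V) : Prop :=
  w ∈ p.colorSet c ∧ closedNbhd G w ∩ p.colorSet (!c) = ∅

/-- The key invariant: no Sepy end, and every colored-monochromatic vertex is dead. -/
def Inv (G : SimpleGraph V) (p : Pos V) : Prop :=
  ¬ SepyEnd G p ∧ ∀ c w, CMono G c p w → Dead G c p w

lemma not_colored_of_legal {p : Pos V} {x : V} {c : Bool} (h : LegalMove G p x c) :
    x ∉ colored p := h.1

/-- If a move creates a Sepy end, it must complete the played color around a vertex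
adjacent (in the closed sense) to the played vertex. -/
lemma sepyEnd_play_cases {p : Pos V} {x : V} {c : Bool} (hxun : x ∉ colored p)
    (hse : ¬ SepyEnd G p) (hSE : SepyEnd G (p.play x c)) :
    ∃ w, x ∈ closedNbhd G w ∧ closedNbhd G w ⊆ insert x (p.colorSet c) := by
  rcases sepyEnd_iff.1 hSE with ⟨w, c', hw⟩
  by_cases hxw : x ∈ closedNbhd G w
  · have hc' : c' = c := by
      by_contra hcc
      have := hw hxw
      rw [play_colorSet_other p x hcc] at this
      exact hxun (colorSet_subset_colored p _ this)
    subst hc'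
    rw [play_colorSet_same] at hw
    exact ⟨w, hxw, hw⟩
  · exfalso
    apply hse
    refine sepyEnd_iff.2 ⟨w, c', fun t ht => ?_⟩
    have h1 := hw ht
    by_cases hcc : c' = c
    · subst hcc
      rw [play_colorSet_same] at h1
      rcases Set.mem_insert_iff.1 h1 with rfl | h1
      · exact absurd ht hxw
      · exact h1
    · rwa [play_colorSet_other p x hcc] at h1

/-- From a fully-`c`-filled closed neighborhood (except the uncolored `x`),
extract the monochromatic structure. -/
lemma cmono_of_filled {p : Pos V} (hsep : Sep p) {x : V} {c : Bool} {w : V}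
    (hxun : x ∉ colored p) (hwx : w ≠ x)
    (hw : closedNbhd G w ⊆ insert x (p.colorSet c)) :
    CMono G c p w ∧ ∀ x' ∈ closedNbhd G w, x' ∉ colored p → x' = x := by
  have hmem : ∀ t ∈ closedNbhd G w, t = x ∨ t ∈ p.colorSet c := by
    intro t ht
    exact Set.mem_insert_iff.1 (hw ht)
  refine ⟨⟨?_, ?_⟩, ?_⟩
  · rcases hmem w (cn_self w) with h | h
    · exact absurd h hwx
    · exact h
  · rw [inter_empty_iff]
    intro t ht htc
    rcases hmem t ht with rfl | h
    · exact hxun (colorSet_subset_colored p _ htc)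
    · exact hsep t c h htc
  · intro x' hx'N hx'un
    rcases hmem x' hx'N with h | h
    · exact h
    · exact absurd (colorSet_subset_colored p _ h) hx'un

/-- **L1**: a legal move from a position satisfying the invariant (second half)
never creates a Sepy end. -/
lemma noSepyEnd_of_inv_play (hiso : ∀ v : V, ∃ u : V, G.Adj v u)
    {p : Pos V} (hsep : Sep p) (hse : ¬ SepyEnd G p)
    (hinv : ∀ c w, CMono G c p w → Dead G c p w)
    {x : V} {c : Bool} (hleg : LegalMove G p x c) :
    ¬ SepyEnd G (p.play x c) := by
  intro hSE
  obtain ⟨hxun, z, hzNx, hz⟩ := hleg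
  obtain ⟨w, hxw, hw⟩ := sepyEnd_play_cases hxun hse hSE
  by_cases hwx : w = x
  · subst hwx
    have hfill : ∀ t ∈ closedNbhd G w, t ≠ w → t ∈ p.colorSet c := by
      intro t ht htx
      rcases Set.mem_insert_iff.1 (hw ht) with h | h
      · exact absurd h htx
      · exact h
    obtain ⟨t0, ht0⟩ := hiso w
    have ht0m : t0 ∈ closedNbhd G w := mem_cn_iff.2 (Or.inr ht0)
    have ht0x : t0 ≠ w := fun h => G.loopless.irrefl w (h ▸ ht0)
    have ht0c : t0 ∈ p.colorSet c := hfill t0 ht0m ht0x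
    by_cases hzx : z = w
    · subst hzx
      exact (inter_empty_iff.1 hz) t0 ht0m ht0c
    · have hzc : z ∈ p.colorSet c := hfill z hzNx hzx
      exact (inter_empty_iff.1 hz) z (cn_self z) hzc
  · obtain ⟨hcm, huniq⟩ := cmono_of_filled hsep hxun hwx hw
    obtain ⟨x', hx'N, hx'un, hwit⟩ := hinv c w hcm
    have hx'x : x' = x := huniq x' hx'N hx'un
    subst hx'x
    obtain ⟨t, htz⟩ := hwit z hzNx
    exact (inter_empty_iff.1 hz) t htz.1 htz.2

/-- **L2**: after a legal move from an invariant position, every live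
colored-monochromatic vertex must be the played vertex with the played color. -/
lemma live_only_played {p : Pos V} (hsep : Sep p)
    (hinv : ∀ c w, CMono G c p w → Dead G c p w)
    {x : V} {c : Bool} (hleg : LegalMove G p x c)
    {w : V} {c' : Bool} (hcm : CMono G c' (p.play x c) w)
    (hne : ¬ (w = x ∧ c' = c)) :
    Dead G c' (p.play x c) w := by
  obtain ⟨hxun, z, hzNx, hz⟩ := hleg
  obtain ⟨hwc, hmono⟩ := hcm
  have hwnx : w ≠ x := by
    rintro rfl
    have hc' : c' = c := by
      by_contra hcc
      rw [play_colorSet_other p w hcc] at hwc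
      exact hxun (colorSet_subset_colored p _ hwc)
    exact hne ⟨rfl, hc'⟩
  have hwcp : w ∈ p.colorSet c' := by
    by_cases hcc : c' = c
    · subst hcc
      rw [play_colorSet_same] at hwc
      rcases Set.mem_insert_iff.1 hwc with h | h
      · exact absurd h hwnx
      · exact h
    · rwa [play_colorSet_other p x hcc] at hwc
  have hmonop : closedNbhd G w ∩ p.colorSet (!c') = ∅ := by
    rw [inter_empty_iff]
    intro t ht htc
    exact (inter_empty_iff.1 hmono) t ht (colorSet_mono_play p x c _ htc)
  obtain ⟨x', hx'N, hx'un, hwit⟩ := hinv c' w ⟨hwcp, hmonop⟩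
  by_cases hx'x : x' = x
  · subst hx'x
    exfalso
    by_cases hcc : c' = c
    · subst hcc
      obtain ⟨t, ht⟩ := hwit z hzNx
      exact (inter_empty_iff.1 hz) t ht.1 ht.2
    · have hcx : x' ∈ (p.play x' c).colorSet (!c') := by
        have hcbang : (!c') = c := by cases c <;> cases c' <;> simp_all
        rw [hcbang, play_colorSet_same]
        exact Set.mem_insert _ _
      exact (inter_empty_iff.1 hmono) x' hx'N hcx
  · refine ⟨x', hx'N, ?_, fun z' hz' => ?_⟩
    · rw [play_colored]
      intro hmem
      rcases Set.mem_insert_iff.1 hmem with h | h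
      · exact hx'x h
      · exact hx'un h
    · obtain ⟨t, ht⟩ := hwit z' hz'
      exact ⟨t, ht.1, colorSet_mono_play p x c _ ht.2⟩

/-- **L3** (kill lemma): if the unique possibly-live colored-monochromatic vertex is
`xh` in color `ch`, Dom can color some uncolored vertex of `N[xh]` with the opposite
color, restoring the full invariant. -/
lemma kill_lemma {p : Pos V} (hsep : Sep p) (hse : ¬ SepyEnd G p) {xh : V} {ch : Bool}
    (halmost : ∀ w c', CMono G c' p w → Dead G c' p w ∨ (w = xh ∧ c' = ch))
    (hcm : CMono G ch p xh) :
    ∃ y, y ∉ colored p ∧ LegalMove G p y (!ch) ∧ Inv G (p.play y (!ch)) := by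
  obtain ⟨hxhc, hxhmono⟩ := hcm
  have hy : ∃ y ∈ closedNbhd G xh, y ∉ colored p := by
    by_contra h
    push_neg at h
    apply hse
    refine sepyEnd_iff.2 ⟨xh, ch, fun t ht => ?_⟩
    rcases (mem_colored_iff ch).1 (h t ht) with h1 | h1
    · exact h1
    · exact ((inter_empty_iff.1 hxhmono) t ht h1).elim
  obtain ⟨y, hyN, hyun⟩ := hy
  have hxhNy : xh ∈ closedNbhd G y := cn_comm hyN
  have hleg : LegalMove G p y (!ch) := ⟨hyun, xh, hxhNy, hxhmono⟩
  have hxhny : xh ≠ y := by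
    rintro rfl
    exact hyun (colorSet_subset_colored p _ hxhc)
  have hnse : ¬ SepyEnd G (p.play y (!ch)) := by
    intro hSE
    obtain ⟨w, hyw, hw⟩ := sepyEnd_play_cases hyun hse hSE
    by_cases hwy : w = y
    · subst hwy
      rcases Set.mem_insert_iff.1 (hw hxhNy) with h | h
      · exact hxhny h
      · exact hsep xh ch hxhc (by cases ch <;> simpa using h)
    · obtain ⟨hcm', huniq⟩ := cmono_of_filled hsep hyun hwy hw
      rcases halmost w (!ch) hcm' with hdead | ⟨rfl, hcc⟩
      · obtain ⟨x', hx'N, hx'un, hwit⟩ := hdead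
        have hx'y : x' = y := huniq x' hx'N hx'un
        subst hx'y
        obtain ⟨t, ht⟩ := hwit xh hxhNy
        exact (inter_empty_iff.1 hxhmono) t ht.1 ht.2
      · exact (by cases ch <;> simp_all : False)
  refine ⟨y, hyun, hleg, hnse, ?_⟩
  intro c' w hcm'
  obtain ⟨hwc, hmono⟩ := hcm'
  have hxhplay : xh ∈ (p.play y (!ch)).colorSet ch :=
    colorSet_mono_play p y (!ch) ch hxhc
  by_cases hwy : w = y
  · subst hwy
    exfalso
    have hc' : c' = (!ch) := by
      by_contra hcc
      rw [play_colorSet_other p w hcc] at hwc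
      exact hyun (colorSet_subset_colored p _ hwc)
    subst hc'
    have : xh ∈ closedNbhd G w ∩ (p.play w (!ch)).colorSet (!(!ch)) := by
      refine ⟨hxhNy, ?_⟩
      rwa [Bool.not_not]
    rw [hmono] at this
    exact this
  · have hwcp : w ∈ p.colorSet c' := by
      by_cases hcc : c' = (!ch)
      · subst hcc
        rw [play_colorSet_same] at hwc
        rcases Set.mem_insert_iff.1 hwc with h | h
        · exact absurd h hwy
        · exact h
      · rwa [play_colorSet_other p y hcc] at hwc
    have hmonop : closedNbhd G w ∩ p.colorSet (!c') = ∅ := by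
      rw [inter_empty_iff]
      intro t ht htc
      exact (inter_empty_iff.1 hmono) t ht (colorSet_mono_play p y (!ch) _ htc)
    rcases halmost w c' ⟨hwcp, hmonop⟩ with hdead | ⟨rfl, rfl⟩
    · obtain ⟨x', hx'N, hx'un, hwit⟩ := hdead
      by_cases hx'y : x' = y
      · subst hx'y
        exfalso
        by_cases hcc : c' = (!ch)
        · subst hcc
          obtain ⟨t, ht⟩ := hwit xh hxhNy
          exact (inter_empty_iff.1 hxhmono) t ht.1 ht.2
        · have hcb : (!c') = (!ch) := by cases ch <;> cases c' <;> simp_all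
          have : x' ∈ (p.play x' (!ch)).colorSet (!c') := by
            rw [hcb, play_colorSet_same]
            exact Set.mem_insert _ _
          exact (inter_empty_iff.1 hmono) x' hx'N this
      · refine ⟨x', hx'N, ?_, fun z' hz' => ?_⟩
        · rw [play_colored]
          intro hmem
          rcases Set.mem_insert_iff.1 hmem with h | h
          · exact hx'y h
          · exact hx'un h
        · obtain ⟨t, ht⟩ := hwit z' hz'
          exact ⟨t, ht.1, colorSet_mono_play p y (!ch) _ ht.2⟩
    · exfalso
      have hyp : y ∈ (p.play y (!c')).colorSet (!c') := by
        rw [play_colorSet_same]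
        exact Set.mem_insert _ _
      exact (inter_empty_iff.1 hmono) y hyN hyp

/-- Helper: from ¬DomEnd extract an undominated pair. -/
lemma exists_empty_inter {p : Pos V} (hd : ¬ DomEnd G p) :
    ∃ (c0 : Bool) (w0 : V), closedNbhd G w0 ∩ p.colorSet c0 = ∅ := by
  rw [DomEnd] at hd
  rcases not_and_or.1 hd with h | h
  · rw [Dominates] at h
    push_neg at h
    obtain ⟨w0, hw0⟩ := h
    exact ⟨true, w0, by rw [cs_true]; exact hw0⟩
  · rw [Dominates] at h
    push_neg at h
    obtain ⟨w0, hw0⟩ := h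
    exact ⟨false, w0, by rw [cs_false]; exact hw0⟩

lemma exists_uncolored_in {p : Pos V} (hse : ¬ SepyEnd G p) {w0 : V} {c0 : Bool}
    (h : closedNbhd G w0 ∩ p.colorSet c0 = ∅) :
    ∃ y ∈ closedNbhd G w0, y ∉ colored p := by
  by_contra hc
  push_neg at hc
  apply hse
  refine sepyEnd_iff.2 ⟨w0, !c0, fun t ht => ?_⟩
  rcases (mem_colored_iff c0).1 (hc t ht) with h1 | h1
  · exact ((inter_empty_iff.1 h) t ht h1).elim
  · exact h1

lemma exists_legal {p : Pos V} (hse : ¬ SepyEnd G p) (hd : ¬ DomEnd G p) :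
    ∃ y c0, LegalMove G p y c0 := by
  obtain ⟨c0, w0, hw0⟩ := exists_empty_inter hd
  obtain ⟨y, hyN, hyun⟩ := exists_uncolored_in hse hw0
  exact ⟨y, c0, hyun, w0, cn_comm hyN, hw0⟩

/-- **L4** (quiet-move lemma): with the full invariant and at least one colored
vertex, if the game is not over Dom has a move preserving the invariant. -/
lemma quiet_lemma (hconn : G.Connected) (hiso : ∀ v : V, ∃ u : V, G.Adj v u)
    {p : Pos V} (hsep : Sep p) (hse : ¬ SepyEnd G p)
    (hinv : ∀ c w, CMono G c p w → Dead G c p w)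
    (hd : ¬ DomEnd G p) (hcol : (colored p).Nonempty) :
    ∃ y c0, y ∉ colored p ∧ LegalMove G p y c0 ∧ Inv G (p.play y c0) := by
  by_cases hcase : ∃ (c0 : Bool) (w0 y : V), closedNbhd G w0 ∩ p.colorSet c0 = ∅ ∧
      y ∈ closedNbhd G w0 ∧ y ∉ colored p ∧ (closedNbhd G y ∩ p.colorSet (!c0)).Nonempty
  · obtain ⟨c0, w0, y, hw0, hyN, hyun, hyop⟩ := hcase
    have hleg : LegalMove G p y c0 := ⟨hyun, w0, cn_comm hyN, hw0⟩
    refine ⟨y, c0, hyun, hleg, noSepyEnd_of_inv_play hiso hsep hse hinv hleg, ?_⟩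
    intro c' w hcm
    by_cases h : w = y ∧ c' = c0
    · exfalso
      obtain ⟨rfl, rfl⟩ := h
      obtain ⟨t, ht⟩ := hyop
      have : t ∈ closedNbhd G w ∩ (p.play w c').colorSet (!c') :=
        ⟨ht.1, colorSet_mono_play p w c' _ ht.2⟩
      rw [hcm.2] at this
      exact this
    · exact live_only_played hsep hinv hleg hcm h
  · exfalso
    push_neg at hcase
    obtain ⟨c0, w0, hw0⟩ := exists_empty_inter hd
    obtain ⟨y0, hy0N, hy0un⟩ := exists_uncolored_in hse hw0
    have h1 : closedNbhd G y0 ∩ p.colorSet (!c0) = ∅ :=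
      hcase c0 w0 y0 hw0 hy0N hy0un
    have h2 : closedNbhd G y0 ∩ p.colorSet c0 = ∅ := by
      have := hcase (!c0) y0 y0 h1 (cn_self y0) hy0un
      rw [Bool.not_not] at this
      exact this
    set F : V → Prop := fun z => z ∉ colored p ∧
      closedNbhd G z ∩ p.colorSet true = ∅ ∧ closedNbhd G z ∩ p.colorSet false = ∅ with hF
    have hy0F : F y0 := by
      refine ⟨hy0un, ?_, ?_⟩ <;> cases c0 <;> simp_all
    have hstep : ∀ z t, F z → t ∈ closedNbhd G z → F t := by
      intro z t hz ht
      have htun : t ∉ colored p := by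
        intro hcol'
        rcases (mem_colored_iff true).1 hcol' with h | h
        · exact (inter_empty_iff.1 hz.2.1) t ht h
        · exact (inter_empty_iff.1 hz.2.2) t ht (by simpa using h)
      refine ⟨htun, ?_, ?_⟩
      · have := hcase false z t hz.2.2 ht htun
        simpa using this
      · have := hcase true z t hz.2.1 ht htun
        simpa using this
    obtain ⟨z1, hz1⟩ := hcol
    have hwalk : ∀ {a b : V}, G.Walk a b → F a → F b := by
      intro a b wk
      induction wk with
      | nil => exact id
      | cons h q ih =>
        intro hFa
        exact ih (hstep _ _ hFa (mem_cn_iff.2 (Or.inr h)))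
    obtain ⟨wk⟩ := hconn.preconnected y0 z1
    exact (hwalk wk hy0F).1 hz1

lemma compl_insert' (x : V) (s : Set V) : (insert x s)ᶜ = sᶜ \ {x} := by
  ext t
  simp [not_or, and_comm]

lemma measure_step {p : Pos V} [Fintype V] {x : V} (hx : x ∉ colored p) {n : ℕ}
    (h : (colored p)ᶜ.ncard ≤ n + 1) (c : Bool) :
    (colored (p.play x c))ᶜ.ncard ≤ n := by
  rw [play_colored, compl_insert']
  have hfin : ((colored p)ᶜ).Finite := Set.toFinite _
  have := Set.ncard_diff_singleton_lt_of_mem (show x ∈ (colored p)ᶜ from hx) hfin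
  omega

/-- The main induction. -/
lemma main_induction [Fintype V] (hconn : G.Connected) (hiso : ∀ v : V, ∃ u : V, G.Adj v u) :
    ∀ (n : ℕ) (p : Pos V), Sep p → (colored p).Nonempty → (colored p)ᶜ.ncard ≤ n →
      ((Inv G p → DomWins G false p) ∧
        (∀ xh ch, ¬ SepyEnd G p →
          (∀ w c', CMono G c' p w → Dead G c' p w ∨ (w = xh ∧ c' = ch)) →
          DomWins G true p)) := by
  intro n
  induction n with
  | zero =>
    intro p hsep hcol hcard
    have huniv : ∀ z, z ∈ colored p := by
      have hemp : (colored p)ᶜ = ∅ :=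
        (Set.ncard_eq_zero (Set.toFinite _)).1 (Nat.le_zero.1 hcard)
      intro z
      by_contra h
      rw [Set.eq_empty_iff_forall_notMem] at hemp
      exact hemp z h
    have hterm : ∀ hse : ¬ SepyEnd G p, DomEnd G p := by
      intro hse
      have hdom : ∀ (c : Bool) w, (closedNbhd G w ∩ p.colorSet c).Nonempty := by
        intro c w
        rw [Set.nonempty_iff_ne_empty]
        intro hemp
        apply hse
        refine sepyEnd_iff.2 ⟨w, !c, fun t ht => ?_⟩
        rcases (mem_colored_iff c).1 (huniv t) with h | h
        · exact ((inter_empty_iff.1 hemp) t ht h).elim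
        · exact h
      exact ⟨fun w => hdom true w, fun w => hdom false w⟩
    exact ⟨fun hinv => DomWins.terminal _ _ hinv.1 (hterm hinv.1),
      fun _ _ hse _ => DomWins.terminal _ _ hse (hterm hse)⟩
  | succ n ih =>
    intro p hsep hcol hcard
    constructor
    · intro hinv
      by_cases hd : DomEnd G p
      · exact DomWins.terminal _ _ hinv.1 hd
      · refine DomWins.sepyStep p hinv.1 hd (exists_legal hinv.1 hd) ?_
        intro x c hleg
        have hxun : x ∉ colored p := hleg.1
        refine ((ih (p.play x c) (sep_play hsep hxun c)
          ⟨x, by rw [play_colored]; exact Set.mem_insert _ _⟩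
          (measure_step hxun hcard c)).2) x c
          (noSepyEnd_of_inv_play hiso hsep hinv.1 hinv.2 hleg) ?_
        intro w c' hcm
        by_cases h : w = x ∧ c' = c
        · exact Or.inr h
        · exact Or.inl (live_only_played hsep hinv.2 hleg hcm h)
    · intro xh ch hse halmost
      by_cases hd : DomEnd G p
      · exact DomWins.terminal _ _ hse hd
      · by_cases hcmh : CMono G ch p xh
        · obtain ⟨y, hyun, hleg, hinv'⟩ := kill_lemma hsep hse halmost hcmh
          refine DomWins.domStep p y (!ch) hse hd hleg ?_
          exact (ih (p.play y (!ch)) (sep_play hsep hyun _)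
            ⟨y, by rw [play_colored]; exact Set.mem_insert _ _⟩
            (measure_step hyun hcard _)).1 hinv'
        · have hinvf : ∀ c w, CMono G c p w → Dead G c p w := by
            intro c w h
            rcases halmost w c h with hd' | ⟨rfl, rfl⟩
            · exact hd'
            · exact absurd h hcmh
          obtain ⟨y, c0, hyun, hleg, hinv'⟩ :=
            quiet_lemma hconn hiso hsep hse hinvf hd hcol
          refine DomWins.domStep p y c0 hse hd hleg ?_
          exact (ih (p.play y c0) (sep_play hsep hyun _)
            ⟨y, by rw [play_colored]; exact Set.mem_insert _ _⟩
            (measure_step hyun hcard _)).1 hinv'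

end S7



/-- if a finite connected isolate-free graph `G` has two distinct
vertices `u`, `v` with `N[u] ⊆ N[v]`, then Dom has a winning strategy in the
Dom-start Disjoint Domination Game on `G`. -/
theorem statement7 {V : Type*} [Fintype V] (G : SimpleGraph V)
    (hconn : G.Connected) (hiso : ∀ v : V, ∃ u : V, G.Adj v u)
    (u v : V) (huv : u ≠ v) (hsub : closedNbhd G u ⊆ closedNbhd G v) :
    DomWins G true ⟨∅, ∅⟩ := by
  classical
  have hse0 : ¬ SepyEnd G (⟨∅, ∅⟩ : Pos V) := by
    rintro ⟨w, h | h⟩ <;> exact h (S7.cn_self w)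
  have hnd0 : ¬ DomEnd G (⟨∅, ∅⟩ : Pos V) := by
    intro h
    obtain ⟨t, ht⟩ := h.1 u
    exact ht.2
  have hadj : u ∈ closedNbhd G v := hsub (S7.cn_self u)
  have hleg0 : LegalMove G (⟨∅, ∅⟩ : Pos V) v true := by
    refine ⟨by simp, v, S7.cn_self v, ?_⟩
    simp [Pos.colorSet]
  refine DomWins.domStep _ v true hse0 hnd0 hleg0 ?_
  set p1 := (⟨∅, ∅⟩ : Pos V).play v true with hp1
  have hp1purple : p1.purple = {v} := by simp [hp1, Pos.play]
  have hp1blue : p1.blue = ∅ := by simp [hp1, Pos.play]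
  have hcolored1 : S7.colored p1 = {v} := by
    simp [S7.colored, hp1purple, hp1blue]
  have hsep1 : S7.Sep p1 := by
    intro z c h1 h2
    cases c <;>
      simp_all [Pos.colorSet, hp1purple, hp1blue]
  have hinv1 : S7.Inv G p1 := by
    constructor
    · intro hSE
      rcases S7.sepyEnd_iff.1 hSE with ⟨w, c, hw⟩
      cases c
      · have := hw (S7.cn_self w)
        rw [S7.cs_false, hp1blue] at this
        exact this
      · have hwv : w = v := by
          have := hw (S7.cn_self w)
          rw [S7.cs_true, hp1purple] at this
          exact this
        have hadj' : u ∈ closedNbhd G w := by rw [hwv]; exact hadj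
        have := hw hadj'
        rw [S7.cs_true, hp1purple] at this
        exact huv this
    · intro c w hcm
      cases c
      · exfalso
        have := hcm.1
        rw [S7.cs_false, hp1blue] at this
        exact this
      · have hwv : w = v := by
          have := hcm.1
          rw [S7.cs_true, hp1purple] at this
          exact this
        rw [hwv]
        refine ⟨u, hadj, ?_, ?_⟩
        · rw [hcolored1]
          simp [huv]
        · intro z hz
          refine ⟨v, ?_, ?_⟩
          · exact S7.cn_comm (hsub hz)
          · rw [S7.cs_true, hp1purple]
            rfl
  exact (S7.main_induction hconn hiso ((S7.colored p1)ᶜ.ncard) p1 hsep1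
    ⟨v, by rw [hcolored1]; rfl⟩ le_rfl).1 hinv1
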